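/- arXiv:1908.02098 — 3 statements merged into one kernel-verified Lean document; each statement's English description precedes it below -/
import Mathlib

section
/- For any real number β > 1 and any integer n ≥ 1, the number of admissible words of length n in the β-expansion satisfies β^n ≤ #Σ_β^n ≤ β^(n+1)/(β-1). -/
open MeasureTheory Filter Real Set

noncomputable section

/-- The β-transformation `x ↦ βx mod 1`. -/
def bT (β x : ℝ) : ℝ := Int.fract (β * x)

/-- The digit `ε_{j+1}(x, β) = ⌊β T_β^j x⌋` (0-indexed). -/
def dig (β x : ℝ) (j : ℕ) : ℤ := ⌊β * (bT β)^[j] x⌋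

/-- A finite word is admissible if it is the initial digit string of some `x ∈ [0,1)`. -/
def Adm (β : ℝ) (w : List ℤ) : Prop :=
  ∃ x ∈ Set.Ico (0:ℝ) 1, ∀ i : Fin w.length, dig β x i = w.get i

/-- The set `Σ_β^n` of admissible words of length `n`. -/
def SigmaB (β : ℝ) (n : ℕ) : Set (List ℤ) := {w | w.length = n ∧ Adm β w}

/-- The cylinder of a word. -/
def cyl (β : ℝ) (w : List ℤ) : Set ℝ :=
  {x | x ∈ Set.Ico (0:ℝ) 1 ∧ ∀ i : Fin w.length, dig β x i = w.get i}

/-- The length of a cylinder. -/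
def cylLen (β : ℝ) (w : List ℤ) : ℝ := (volume (cyl β w)).toReal

/-- A word/cylinder is full if the cylinder has maximal length `β^{-n}`. -/
def IsFull (β : ℝ) (w : List ℤ) : Prop := cylLen β w = (β ^ w.length)⁻¹

/-- The left endpoint `Σ_j ε_j β^{-j}` of the cylinder of a word. -/
def leftpt (β : ℝ) (w : List ℤ) : ℝ :=
  ∑ i : Fin w.length, (w.get i : ℝ) / β ^ ((i : ℕ) + 1)

/-- Birkhoff (ergodic) sum `S_n f(x)`. -/
def birk (β : ℝ) (f : ℝ → ℝ) (n : ℕ) (x : ℝ) : ℝ :=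
  ∑ j ∈ Finset.range n, f ((bT β)^[j] x)

/-- The digit sequence of `1`. -/
def eps1 (β : ℝ) (j : ℕ) : ℤ := ⌊β * (bT β)^[j] 1⌋

/-- The infinite β-expansion of `1`. -/
def epsStar (β : ℝ) : ℕ → ℤ := by
  classical
  exact
  if h : ∃ m, eps1 β m ≠ 0 ∧ ∀ k, m < k → eps1 β k = 0 then
    fun j =>
      if j % (h.choose + 1) = h.choose then eps1 β h.choose - 1
      else eps1 β (j % (h.choose + 1))
  else eps1 β

/-- Strict lexicographic order on integer sequences. -/
def lexLt (a b : ℕ → ℤ) : Prop := ∃ k, (∀ j, j < k → a j = b j) ∧ a k < b k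

/-- The partition function `Σ_{w ∈ Σ_β^n} sup_{y ∈ I_n(w)} e^{S_n g(y)}`. -/
def presSum (β : ℝ) (g : ℝ → ℝ) (n : ℕ) : ℝ :=
  ∑' w : SigmaB β n, ⨆ y ∈ cyl β (w : List ℤ), Real.exp (birk β g n y)

/-- The pressure function `P(g, T_β)`. -/
def pressure (β : ℝ) (g : ℝ → ℝ) : ℝ :=
  limUnder Filter.atTop fun n : ℕ => Real.log (presSum β g n) / n

end

noncomputable section Aux

/-- partial sum of the β-expansion of `x`. -/
def dsum (β x : ℝ) (n : ℕ) : ℝ := ∑ j ∈ Finset.range n, (dig β x j : ℝ) / β ^ (j + 1)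

lemma bT_mem (β x : ℝ) : bT β x ∈ Set.Ico (0:ℝ) 1 :=
  ⟨Int.fract_nonneg _, Int.fract_lt_one _⟩

lemma iter_mem {β x : ℝ} (hx : x ∈ Set.Ico (0:ℝ) 1) (i : ℕ) :
    (bT β)^[i] x ∈ Set.Ico (0:ℝ) 1 := by
  cases i with
  | zero => exact hx
  | succ i => rw [Function.iterate_succ_apply']; exact bT_mem β _

lemma iter_eq {β : ℝ} (hβ : 1 < β) (x : ℝ) (n : ℕ) :
    (bT β)^[n] x = β ^ n * (x - dsum β x n) := by
  have hβ0 : (0:ℝ) < β := lt_trans one_pos hβ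
  induction n with
  | zero => simp [dsum]
  | succ n ih =>
    rw [Function.iterate_succ_apply']
    have hb : bT β ((bT β)^[n] x) = β * (bT β)^[n] x - (dig β x n : ℝ) := rfl
    rw [hb, ih,
      show dsum β x (n+1) = dsum β x n + (dig β x n : ℝ) / β ^ (n+1) from
        Finset.sum_range_succ _ _]
    have hpow : β ^ (n+1) ≠ 0 := by positivity
    field_simp
    ring

lemma dig_nonneg {β x : ℝ} (hβ : 1 < β) (hx : x ∈ Set.Ico (0:ℝ) 1) (j : ℕ) :
    0 ≤ dig β x j :=
  Int.floor_nonneg.2 (mul_nonneg (by linarith) (iter_mem hx j).1)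

lemma dig_lt {β x : ℝ} (hβ : 1 < β) (hx : x ∈ Set.Ico (0:ℝ) 1) (j : ℕ) :
    (dig β x j : ℝ) < β := by
  have h1 := (iter_mem (β := β) hx j).2
  have h0 := (iter_mem (β := β) hx j).1
  have : (dig β x j : ℝ) ≤ β * (bT β)^[j] x := Int.floor_le _
  nlinarith

lemma dsum_nonneg {β x : ℝ} (hβ : 1 < β) (hx : x ∈ Set.Ico (0:ℝ) 1) (n : ℕ) :
    0 ≤ dsum β x n := by
  apply Finset.sum_nonneg
  intro j _
  have h := dig_nonneg hβ hx j
  have h' : (0:ℝ) ≤ (dig β x j : ℝ) := by exact_mod_cast h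
  have hβ0 : (0:ℝ) < β := lt_trans one_pos hβ
  exact div_nonneg h' (pow_nonneg hβ0.le _)

lemma dsum_le_self {β x : ℝ} (hβ : 1 < β) (hx : x ∈ Set.Ico (0:ℝ) 1) (n : ℕ) :
    dsum β x n ≤ x := by
  have h := (iter_mem (β := β) hx n).1
  rw [iter_eq hβ] at h
  have hp : (0:ℝ) < β ^ n := by positivity
  nlinarith

lemma lt_dsum_add {β x : ℝ} (hβ : 1 < β) (hx : x ∈ Set.Ico (0:ℝ) 1) (n : ℕ) :
    x < dsum β x n + (β ^ n)⁻¹ := by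
  have h := (iter_mem (β := β) hx n).2
  rw [iter_eq hβ] at h
  have hp : (0:ℝ) < β ^ n := by positivity
  have h2 : x - dsum β x n < (β ^ n)⁻¹ := by
    have hinv := mul_inv_cancel₀ (ne_of_gt hp)
    nlinarith [h, hp, hinv]
  linarith

/-- key: digits of any `y` between the left endpoint and `x` agree with those of `x`. -/
lemma dig_eq_of_between {β x : ℝ} (hβ : 1 < β) (hx : x ∈ Set.Ico (0:ℝ) 1) {n : ℕ} {y : ℝ}
    (h1 : dsum β x n ≤ y) (h2 : y ≤ x) : ∀ j, j < n → dig β y j = dig β x j := by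
  have hβ0 : (0:ℝ) < β := lt_trans one_pos hβ
  have key : ∀ i, i ≤ n → ∀ j, j < i → dig β y j = dig β x j := by
    intro i
    induction i with
    | zero => intro _ j hj; omega
    | succ i ih =>
      intro hi j hj
      have ihh := ih (by omega)
      rcases Nat.lt_succ_iff_lt_or_eq.mp hj with h | h
      · exact ihh j h
      subst h
      have hds : dsum β y j = dsum β x j := by
        apply Finset.sum_congr rfl
        intro k hk
        rw [ihh k (Finset.mem_range.mp hk)]
      have hyi : (bT β)^[j] y = β ^ j * (y - dsum β x j) := by
        rw [iter_eq hβ, hds]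
      have hxi : (bT β)^[j] x = β ^ j * (x - dsum β x j) := iter_eq hβ x j
      have hjn : j < n := by omega
      -- lower bound: dsum β x n - dsum β x j ≥ dig_j / β^(j+1)
      have hgap : (dig β x j : ℝ) / β ^ (j+1) ≤ dsum β x n - dsum β x j := by
        rw [dsum, dsum, ← Finset.sum_Ico_eq_sub _ (le_of_lt hjn)]
        apply Finset.single_le_sum (f := fun k => (dig β x k : ℝ) / β ^ (k+1))
        · intro k _
          have := dig_nonneg hβ hx k
          have : (0:ℝ) ≤ (dig β x k : ℝ) := by exact_mod_cast this
          positivity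
        · exact Finset.mem_Ico.mpr ⟨le_refl _, hjn⟩
      have hp : (0:ℝ) < β ^ (j+1) := by positivity
      have hlow : (dig β x j : ℝ) ≤ β * (bT β)^[j] y := by
        rw [hyi]
        have : (dig β x j : ℝ) / β ^ (j+1) ≤ y - dsum β x j := by linarith
        have h3 : (dig β x j : ℝ) ≤ β ^ (j+1) * (y - dsum β x j) := by
          rw [div_le_iff₀ hp] at this
          linarith [this]
        calc (dig β x j : ℝ) ≤ β ^ (j+1) * (y - dsum β x j) := h3
          _ = β * (β ^ j * (y - dsum β x j)) := by ring
      have hup : β * (bT β)^[j] y < (dig β x j : ℝ) + 1 := by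
        have hmono : (bT β)^[j] y ≤ (bT β)^[j] x := by
          rw [hyi, hxi]
          have : (0:ℝ) ≤ β ^ j := by positivity
          nlinarith
        have := Int.lt_floor_add_one (β * (bT β)^[j] x)
        have hdd : (⌊β * (bT β)^[j] x⌋ : ℝ) = (dig β x j : ℝ) := by rfl
        nlinarith
      show ⌊β * (bT β)^[j] y⌋ = dig β x j
      rw [Int.floor_eq_iff]
      exact ⟨hlow, by push_cast; linarith⟩
  exact key n le_rfl

lemma leftpt_eq_dsum {β x : ℝ} {w : List ℤ}
    (hdig : ∀ i : Fin w.length, dig β x i = w.get i) :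
    leftpt β w = dsum β x w.length := by
  unfold leftpt dsum
  rw [← Fin.sum_univ_eq_sum_range (fun j => (dig β x j : ℝ) / β ^ (j+1)) w.length]
  apply Finset.sum_congr rfl
  intro i _
  rw [← hdig i]

lemma sigma_fin {β : ℝ} (hβ : 1 < β) (n : ℕ) : (SigmaB β n).Finite := by
  classical
  have hsub : SigmaB β n ⊆
      Set.range (fun f : Fin n → Finset.Icc (0:ℤ) ⌈β⌉ => List.ofFn fun i => ((f i : ℤ))) := by
    rintro w ⟨hlen, x, hx, hdig⟩
    subst hlen
    refine ⟨fun i => ⟨dig β x (i : ℕ), ?_⟩, ?_⟩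
    · rw [Finset.mem_Icc]
      refine ⟨dig_nonneg hβ hx _, ?_⟩
      have h1 := dig_lt hβ hx (i : ℕ)
      have h2 := Int.le_ceil β
      exact_mod_cast le_of_lt (lt_of_lt_of_le h1 h2)
    · apply List.ext_getElem (by simp)
      intro i h1 h2
      simp only [List.getElem_ofFn]
      have := hdig ⟨i, h2⟩
      simp only [List.get_eq_getElem] at this
      exact this.symm ▸ rfl
  exact (Set.finite_range _).subset hsub

lemma take_mem_SigmaB {β : ℝ} {n : ℕ} {w : List ℤ} (hw : w ∈ SigmaB β (n+1)) :
    w.take n ∈ SigmaB β n := by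
  obtain ⟨hlen, x, hx, hdig⟩ := hw
  refine ⟨by simp [hlen], x, hx, ?_⟩
  intro i
  have hi : (i : ℕ) < w.length := by
    have := i.2
    simp [hlen] at this ⊢
    omega
  have h1 : (w.take n).get i = w.get ⟨i, hi⟩ := by
    simp only [List.get_eq_getElem, List.getElem_take]
  rw [h1, ← hdig ⟨i, hi⟩]

lemma ext_of_take_getD {n : ℕ} {w w' : List ℤ} (hl : w.length = n+1) (hl' : w'.length = n+1)
    (ht : w.take n = w'.take n) (hd : w.getD n 0 = w'.getD n 0) : w = w' := by
  apply List.ext_getElem (by omega)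
  intro i h1 h2
  rcases Nat.lt_or_ge i n with h | h
  · have e1 : w[i] = (w.take n)[i]'(by simp; omega) := (List.getElem_take).symm
    have e2 : w'[i] = (w'.take n)[i]'(by simp; omega) := (List.getElem_take).symm
    rw [e1, e2]
    simp only [ht]
  · have hin : i = n := by omega
    subst hin
    rw [← List.getD_eq_getElem w 0 h1, ← List.getD_eq_getElem w' 0 h2, hd]

lemma cyl_disjoint {β : ℝ} {w w' : List ℤ} (hlen : w.length = w'.length) (hne : w ≠ w') :
    Disjoint (cyl β w) (cyl β w') := by
  rw [Set.disjoint_left]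
  rintro y ⟨hy, hdig⟩ ⟨hy', hdig'⟩
  apply hne
  apply List.ext_getElem hlen
  intro i h1 h2
  have e1 := hdig ⟨i, h1⟩
  have e2 := hdig' ⟨i, h2⟩
  simp only [List.get_eq_getElem] at e1 e2
  rw [← e1, ← e2]

lemma cyl_subset_Ico {β : ℝ} (w : List ℤ) : cyl β w ⊆ Set.Ico (0:ℝ) 1 :=
  fun _ hy => hy.1

/-- Lower bound: `β ^ n ≤ #Σ_β^n`. -/
lemma sigma_lower {β : ℝ} (hβ : 1 < β) (n : ℕ) :
    β ^ n ≤ ((SigmaB β n).ncard : ℝ) := by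
  classical
  have hβ0 : (0:ℝ) < β := lt_trans one_pos hβ
  have hfin := sigma_fin hβ n
  set F := hfin.toFinset with hF
  have hδ : (0:ℝ) < (β ^ n)⁻¹ := by positivity
  have hcov : Set.Ico (0:ℝ) 1 ⊆
      ⋃ w ∈ F, Set.Ico (leftpt β w) (leftpt β w + (β ^ n)⁻¹) := by
    intro x hx
    set w := List.ofFn (fun i : Fin n => dig β x i) with hw
    have hwdig : ∀ i : Fin w.length, dig β x i = w.get i := by
      intro i
      have hi : (i : ℕ) < n := by
        have := i.2; simpa [hw] using this
      simp only [List.get_eq_getElem, hw, List.getElem_ofFn]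
    have hwmem : w ∈ SigmaB β n := ⟨by simp [hw], x, hx, hwdig⟩
    have hlp : leftpt β w = dsum β x n := by
      rw [leftpt_eq_dsum hwdig]
      congr 1
      simp [hw]
    refine Set.mem_biUnion (hfin.mem_toFinset.mpr hwmem) ?_
    rw [hlp]
    exact ⟨dsum_le_self hβ hx n, lt_dsum_add hβ hx n⟩
  have hmeas : (1 : ENNReal) ≤ (F.card : ENNReal) * ENNReal.ofReal ((β ^ n)⁻¹) := by
    calc (1 : ENNReal) = volume (Set.Ico (0:ℝ) 1) := by simp
      _ ≤ volume (⋃ w ∈ F, Set.Ico (leftpt β w) (leftpt β w + (β ^ n)⁻¹)) :=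
          measure_mono hcov
      _ ≤ ∑ w ∈ F, volume (Set.Ico (leftpt β w) (leftpt β w + (β ^ n)⁻¹)) :=
          measure_biUnion_finset_le F _
      _ = ∑ _w ∈ F, ENNReal.ofReal ((β ^ n)⁻¹) := by
          apply Finset.sum_congr rfl
          intro w _
          rw [Real.volume_Ico]
          congr 1
          ring
      _ = (F.card : ENNReal) * ENNReal.ofReal ((β ^ n)⁻¹) := by
          rw [Finset.sum_const, nsmul_eq_mul]
  have hne : ((F.card : ENNReal) * ENNReal.ofReal ((β ^ n)⁻¹)) ≠ ⊤ := by
    exact ENNReal.mul_ne_top (ENNReal.natCast_ne_top _) ENNReal.ofReal_ne_top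
  have hreal : (1:ℝ) ≤ (F.card : ℝ) * (β ^ n)⁻¹ := by
    have := ENNReal.toReal_mono hne hmeas
    rw [ENNReal.toReal_one, ENNReal.toReal_mul, ENNReal.toReal_ofReal hδ.le] at this
    exact_mod_cast this
  have hcard : β ^ n ≤ (F.card : ℝ) := by
    have hp : (0:ℝ) < β ^ n := by positivity
    have hinv := mul_inv_cancel₀ (ne_of_gt hp)
    nlinarith [hreal, hinv, hp]
  rwa [Set.ncard_eq_toFinset_card _ hfin]

/-- Upper bound recursion. -/
lemma sigma_upper_aux {β : ℝ} (hβ : 1 < β) :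
    ∀ n : ℕ, ((SigmaB β n).ncard : ℝ) ≤ ∑ k ∈ Finset.range (n+1), β ^ k := by
  classical
  have hβ0 : (0:ℝ) < β := lt_trans one_pos hβ
  intro n
  induction n with
  | zero =>
    have h0 : SigmaB β 0 = {([] : List ℤ)} := by
      ext w
      constructor
      · rintro ⟨hlen, _⟩
        exact List.length_eq_zero_iff.mp hlen
      · rintro rfl
        exact ⟨rfl, 0, ⟨le_refl _, one_pos⟩, fun i => i.elim0⟩
    rw [h0, Set.ncard_singleton]
    simp
  | succ n ih =>
    have hfin := sigma_fin hβ (n+1)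
    set F := hfin.toFinset with hF
    set δ := (β ^ (n+1))⁻¹ with hδdef
    have hδ : (0:ℝ) < δ := by positivity
    set F1 := F.filter (fun w => w.getD n 0 ≠ 0) with hF1
    set F0 := F.filter (fun w => ¬ w.getD n 0 ≠ 0) with hF0
    have hsplit : F1.card + F0.card = F.card :=
      Finset.card_filter_add_card_filter_not _
    -- F0 bound
    have hfinn := sigma_fin hβ n
    have hcard0 : F0.card ≤ hfinn.toFinset.card := by
      apply Finset.card_le_card_of_injOn (fun w => w.take n)
      · intro w hw
        rw [hF0, Finset.mem_coe, Finset.mem_filter] at hw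
        exact hfinn.mem_toFinset.mpr (take_mem_SigmaB (hfin.mem_toFinset.mp hw.1))
      · intro w hw w' hw' ht
        simp only [hF0, Finset.coe_filter, Set.mem_setOf_eq] at hw hw'
        have hlw := (hfin.mem_toFinset.mp hw.1).1
        have hlw' := (hfin.mem_toFinset.mp hw'.1).1
        have hd : w.getD n 0 = w'.getD n 0 := by
          have := hw.2; have := hw'.2; omega
        exact ext_of_take_getD hlw hlw' ht hd
    -- F1 bound: disjoint intervals
    set J : List ℤ → Set ℝ := fun w =>
      Set.Ico (leftpt β (w.take n) + ((w.getD n 0 : ℝ) - 1) * δ)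
        (leftpt β (w.take n) + (w.getD n 0 : ℝ) * δ) with hJ
    have hJsub : ∀ w ∈ F1, J w ⊆ cyl β (w.take n) := by
      intro w hw
      rw [hF1, Finset.mem_filter] at hw
      obtain ⟨hwF, hwd⟩ := hw
      have hwmem := hfin.mem_toFinset.mp hwF
      obtain ⟨hlen, x, hx, hdig⟩ := hwmem
      have hnlt : n < w.length := by omega
      have hgetn : w.getD n 0 = dig β x n := by
        rw [List.getD_eq_getElem w 0 hnlt]
        have := hdig ⟨n, hnlt⟩
        simp only [List.get_eq_getElem] at this
        exact this.symm
      have hd1 : 1 ≤ w.getD n 0 := by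
        have := dig_nonneg hβ hx n
        omega
      have hd1' : (1:ℝ) ≤ (w.getD n 0 : ℝ) := by exact_mod_cast hd1
      have htakedig : ∀ i : Fin (w.take n).length, dig β x i = (w.take n).get i := by
        intro i
        have hi : (i : ℕ) < w.length := by
          have := i.2; simp [hlen] at this ⊢; omega
        have h1 : (w.take n).get i = w.get ⟨i, hi⟩ := by
          simp only [List.get_eq_getElem, List.getElem_take]
        rw [h1, ← hdig ⟨i, hi⟩]
      have hlt : (w.take n).length = n := by simp [hlen]
      have hlp : leftpt β (w.take n) = dsum β x n := by
        rw [leftpt_eq_dsum htakedig, hlt]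
      have hxlow : dsum β x n + (w.getD n 0 : ℝ) * δ ≤ x := by
        have hiter := iter_eq hβ x (n+1)
        have hfl : ((dig β x (n+1 - 1) : ℤ) : ℝ) ≤ β * (bT β)^[n] x := Int.floor_le _
        -- dig β x n = ⌊β * T^n x⌋
        have hfl' : ((dig β x n : ℤ) : ℝ) ≤ β * (bT β)^[n] x := Int.floor_le _
        have hTn : (bT β)^[n] x = β ^ n * (x - dsum β x n) := iter_eq hβ x n
        rw [hTn] at hfl'
        have hp : (0:ℝ) < β ^ (n+1) := by positivity
        rw [hgetn, hδdef]
        push_cast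
        rw [ ← le_sub_iff_add_le']
        rw [mul_inv_le_iff₀ hp]
        calc (dig β x n : ℝ) ≤ β * (β ^ n * (x - dsum β x n)) := hfl'
          _ = (x - dsum β x n) * β ^ (n+1) := by ring
      intro y hy
      rw [hJ] at hy
      simp only [Set.mem_Ico] at hy
      rw [hlp] at hy
      have h1 : dsum β x n ≤ y := by nlinarith [hy.1]
      have h2 : y ≤ x := by
        have := hy.2
        linarith [hxlow]
      have hy01 : y ∈ Set.Ico (0:ℝ) 1 := by
        constructor
        · linarith [dsum_nonneg hβ hx n]
        · exact lt_of_le_of_lt h2 hx.2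
      refine ⟨hy01, ?_⟩
      intro i
      have hi : (i : ℕ) < n := by
        have h := i.2; omega
      have hdigeq := dig_eq_of_between hβ hx h1 h2 (i : ℕ) hi
      rw [hdigeq]
      exact htakedig i
    have hdisj : (↑F1 : Set (List ℤ)).PairwiseDisjoint J := by
      intro w hw w' hw' hne
      simp only [Finset.mem_coe] at hw hw'
      have hwF := (Finset.mem_filter.mp (hF1 ▸ hw)).1
      have hwF' := (Finset.mem_filter.mp (hF1 ▸ hw')).1
      have hlw := (hfin.mem_toFinset.mp hwF).1
      have hlw' := (hfin.mem_toFinset.mp hwF').1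
      by_cases ht : w.take n = w'.take n
      · -- same prefix: different last digits
        have hd : w.getD n 0 ≠ w'.getD n 0 := by
          intro hd
          exact hne (ext_of_take_getD hlw hlw' ht hd)
        have : Disjoint (J w) (J w') := by
          rw [hJ]
          simp only
          rw [ht]
          set L := leftpt β (w'.take n)
          set d := w.getD n 0
          set d' := w'.getD n 0
          rcases lt_or_gt_of_ne hd with h | h
          · apply Set.Ico_disjoint_Ico.mpr
            have hdd : (d:ℝ) ≤ (d':ℝ) - 1 := by
              have h2 : d + 1 ≤ d' := by omega
              have h3 : ((d:ℝ)) + 1 ≤ (d':ℝ) := by exact_mod_cast h2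
              linarith
            calc min (L + (d:ℝ) * δ) (L + (d':ℝ) * δ) ≤ L + (d:ℝ) * δ := min_le_left _ _
              _ ≤ L + ((d':ℝ) - 1) * δ := by nlinarith
              _ ≤ max (L + ((d:ℝ) - 1) * δ) (L + ((d':ℝ) - 1) * δ) := le_max_right _ _
          · apply Set.Ico_disjoint_Ico.mpr
            have hdd : (d':ℝ) ≤ (d:ℝ) - 1 := by
              have h2 : d' + 1 ≤ d := by omega
              have h3 : ((d':ℝ)) + 1 ≤ (d:ℝ) := by exact_mod_cast h2
              linarith
            calc min (L + (d:ℝ) * δ) (L + (d':ℝ) * δ) ≤ L + (d':ℝ) * δ := min_le_right _ _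
              _ ≤ L + ((d:ℝ) - 1) * δ := by nlinarith
              _ ≤ max (L + ((d:ℝ) - 1) * δ) (L + ((d':ℝ) - 1) * δ) := le_max_left _ _
        exact this
      · -- different prefixes: inside disjoint cylinders
        have hcyl : Disjoint (cyl β (w.take n)) (cyl β (w'.take n)) := by
          apply cyl_disjoint _ ht
          simp [hlw, hlw']
        exact Set.disjoint_of_subset (hJsub w hw) (hJsub w' hw') hcyl
    have hmeas : (F1.card : ENNReal) * ENNReal.ofReal δ ≤ 1 := by
      calc (F1.card : ENNReal) * ENNReal.ofReal δ = ∑ w ∈ F1, volume (J w) := by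
            rw [Finset.sum_congr rfl (fun w _ => ?_), Finset.sum_const, nsmul_eq_mul]
            rw [hJ]
            simp only
            rw [Real.volume_Ico]
            congr 1
            ring
        _ = volume (⋃ w ∈ F1, J w) :=
            (measure_biUnion_finset hdisj (fun w _ => measurableSet_Ico)).symm
        _ ≤ volume (Set.Ico (0:ℝ) 1) := by
            apply measure_mono
            intro y hy
            rw [Set.mem_iUnion₂] at hy
            obtain ⟨w, hw, hyw⟩ := hy
            exact cyl_subset_Ico _ (hJsub w hw hyw)
        _ = 1 := by simp
    have hcard1 : (F1.card : ℝ) ≤ β ^ (n+1) := by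
      have hne : (1 : ENNReal) ≠ ⊤ := ENNReal.one_ne_top
      have := ENNReal.toReal_mono hne hmeas
      rw [ENNReal.toReal_one, ENNReal.toReal_mul, ENNReal.toReal_ofReal hδ.le] at this
      replace this : (F1.card : ℝ) * δ ≤ 1 := by exact_mod_cast this
      have hp : (0:ℝ) < β ^ (n+1) := by positivity
      rw [hδdef] at this
      have hinv := mul_inv_cancel₀ (ne_of_gt hp)
      nlinarith [this, hinv, hp]
    -- combine
    have hN : (SigmaB β (n+1)).ncard = F.card := Set.ncard_eq_toFinset_card _ hfin
    have hNn : ((SigmaB β n).ncard : ℝ) = (hfinn.toFinset.card : ℝ) := by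
      rw [Set.ncard_eq_toFinset_card _ hfinn]
    rw [hN]
    rw [Finset.sum_range_succ]
    have : (F.card : ℝ) = (F1.card : ℝ) + (F0.card : ℝ) := by
      rw [← hsplit]; push_cast; ring
    rw [this]
    have h0 : (F0.card : ℝ) ≤ ∑ k ∈ Finset.range (n+1), β ^ k := by
      calc (F0.card : ℝ) ≤ (hfinn.toFinset.card : ℝ) := by exact_mod_cast hcard0
        _ = ((SigmaB β n).ncard : ℝ) := hNn.symm
        _ ≤ _ := ih
    linarith

end Aux

theorem stmt0 (β : ℝ) (hβ : 1 < β) (n : ℕ) (hn : 1 ≤ n) :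
    β ^ n ≤ ((SigmaB β n).ncard : ℝ) ∧
      ((SigmaB β n).ncard : ℝ) ≤ β ^ (n + 1) / (β - 1) := by
  have hβ0 : (0:ℝ) < β := lt_trans one_pos hβ
  refine ⟨sigma_lower hβ n, ?_⟩
  calc ((SigmaB β n).ncard : ℝ) ≤ ∑ k ∈ Finset.range (n+1), β ^ k := sigma_upper_aux hβ n
    _ = (β ^ (n+1) - 1) / (β - 1) := geom_sum_eq hβ.ne' (n+1)
    _ ≤ β ^ (n+1) / (β - 1) := by
        have h1 : (0:ℝ) < β - 1 := by linarith
        gcongr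
        linarith
end

section
/- For β > 1 and any n ≥ 1, among every n+1 consecutive cylinders of order n (ordered from left to right in [0,1)), at least one is full. -/
open MeasureTheory Filter Real Set

namespace Stmt6Aux

noncomputable def tvalAux (β : ℝ) : List ℤ → ℝ
  | [] => 1
  | a :: s => min (β * tvalAux β s - a) 1

noncomputable def tval (β : ℝ) (w : List ℤ) : ℝ := tvalAux β w.reverse

lemma tval_nil (β : ℝ) : tval β [] = 1 := rfl

lemma tval_append (β : ℝ) (u : List ℤ) (a : ℤ) :
    tval β (u ++ [a]) = min (β * tval β u - a) 1 := by
  simp [tval, tvalAux, List.reverse_append]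

lemma mem_cyl (β x : ℝ) (w : List ℤ) :
    x ∈ cyl β w ↔ x ∈ Set.Ico (0:ℝ) 1 ∧ ∀ k, (h : k < w.length) → dig β x k = w.getD k 0 := by
  simp only [cyl, Set.mem_setOf_eq, Fin.forall_iff]
  constructor
  · rintro ⟨h1, h2⟩
    refine ⟨h1, fun k h => ?_⟩
    rw [h2 k h]
    simp [List.getD_eq_getElem, List.get_eq_getElem, h]
  · rintro ⟨h1, h2⟩
    refine ⟨h1, fun k h => ?_⟩
    rw [h2 k h]
    simp [List.getD_eq_getElem, List.get_eq_getElem, h]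

lemma leftpt_eq_range (β : ℝ) (w : List ℤ) :
    leftpt β w = ∑ i ∈ Finset.range w.length, (w.getD i 0 : ℝ) / β ^ (i + 1) := by
  rw [leftpt, ← Fin.sum_univ_eq_sum_range]
  apply Finset.sum_congr rfl
  intro i _
  congr 1
  simp [List.getD_eq_getElem, List.get_eq_getElem]

lemma leftpt_append (β : ℝ) (u : List ℤ) (a : ℤ) :
    leftpt β (u ++ [a]) = leftpt β u + (a : ℝ) / β ^ (u.length + 1) := by
  rw [leftpt_eq_range, leftpt_eq_range]
  rw [List.length_append, List.length_singleton, Finset.sum_range_succ]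
  congr 1
  · apply Finset.sum_congr rfl
    intro i hi
    rw [Finset.mem_range] at hi
    congr 2
    rw [List.getD_eq_getElem _ _ hi, List.getD_eq_getElem _ _ (by simpa using Nat.lt_succ_of_lt hi)]
    exact List.getElem_append_left hi
  · congr 2
    rw [List.getD_eq_getElem _ _ (by simp)]
    simp

end Stmt6Aux
namespace Stmt6Aux

lemma mem_cyl_append (β x : ℝ) (u : List ℤ) (a : ℤ) :
    x ∈ cyl β (u ++ [a]) ↔ x ∈ cyl β u ∧ dig β x u.length = a := by
  rw [mem_cyl, mem_cyl]
  constructor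
  · rintro ⟨h1, h2⟩
    refine ⟨⟨h1, fun k hk => ?_⟩, ?_⟩
    · rw [h2 k (by simp; omega)]
      rw [List.getD_eq_getElem _ _ hk, List.getD_eq_getElem _ _ (by simp; omega)]
      exact List.getElem_append_left hk
    · rw [h2 u.length (by simp)]
      rw [List.getD_eq_getElem _ _ (by simp)]
      simp
  · rintro ⟨⟨h1, h2⟩, h3⟩
    refine ⟨h1, fun k hk => ?_⟩
    simp only [List.length_append, List.length_singleton] at hk
    rcases Nat.lt_or_ge k u.length with hlt | hge
    · rw [h2 k hlt, List.getD_eq_getElem _ _ hlt,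
        List.getD_eq_getElem _ _ (by simp; omega)]
      exact (List.getElem_append_left hlt).symm
    · have hk' : k = u.length := by omega
      subst hk'
      rw [h3, List.getD_eq_getElem _ _ (by simp)]
      simp

lemma mem_Ico_bT (β x : ℝ) (hβ : 0 < β) : bT β x ∈ Set.Ico (0:ℝ) 1 :=
  ⟨Int.fract_nonneg _, Int.fract_lt_one _⟩

lemma iter_mem_Ico (β x : ℝ) (hβ : 0 < β) (hx : x ∈ Set.Ico (0:ℝ) 1) (j : ℕ) :
    (bT β)^[j] x ∈ Set.Ico (0:ℝ) 1 := by
  cases j with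
  | zero => exact hx
  | succ m => rw [Function.iterate_succ_apply']; exact mem_Ico_bT β _ hβ

lemma dig_nonneg (β x : ℝ) (hβ : 0 < β) (hx : x ∈ Set.Ico (0:ℝ) 1) (j : ℕ) :
    0 ≤ dig β x j := by
  apply Int.floor_nonneg.mpr
  exact mul_nonneg hβ.le (iter_mem_Ico β x hβ hx j).1

lemma iterate_eq (β : ℝ) (hβ0 : β ≠ 0) (w : List ℤ) :
    ∀ x ∈ cyl β w, (bT β)^[w.length] x = β ^ w.length * (x - leftpt β w) := by
  induction w using List.reverseRecOn with
  | nil =>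
    intro x _
    simp [leftpt]
  | append_singleton u a ih =>
    intro x hx
    rw [mem_cyl_append] at hx
    obtain ⟨hxu, hd⟩ := hx
    have h1 : (bT β)^[u.length] x = β ^ u.length * (x - leftpt β u) := ih x hxu
    have hb : β ^ u.length ≠ 0 := pow_ne_zero _ hβ0
    have hlen : (u ++ [a]).length = u.length + 1 := by simp
    rw [hlen, Function.iterate_succ_apply', h1]
    have hd' : (⌊β * (β ^ u.length * (x - leftpt β u))⌋ : ℝ) = a := by
      have := hd
      rw [dig, h1] at this
      exact_mod_cast congrArg (Int.cast : ℤ → ℝ) this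
    rw [bT, Int.fract, hd', leftpt_append]
    field_simp
    ring

lemma word_eq_of_mem (β x : ℝ) (u v : List ℤ) (hu : x ∈ cyl β u) (hv : x ∈ cyl β v)
    (hl : u.length = v.length) : u = v := by
  rw [mem_cyl] at hu hv
  apply List.ext_getElem hl
  intro k h1 h2
  rw [← List.getD_eq_getElem u 0 h1, ← List.getD_eq_getElem v 0 h2,
    ← hu.2 k h1, ← hv.2 k h2]

end Stmt6Aux
namespace Stmt6Aux

lemma adm_iff (β : ℝ) (w : List ℤ) : Adm β w ↔ (cyl β w).Nonempty := by
  constructor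
  · rintro ⟨x, hx, h2⟩; exact ⟨x, hx, h2⟩
  · rintro ⟨x, hx⟩; exact ⟨x, hx.1, hx.2⟩

lemma tval_le_one (β : ℝ) (w : List ℤ) : tval β w ≤ 1 := by
  induction w using List.reverseRecOn with
  | nil => exact le_refl 1
  | append_singleton u a ih => rw [tval_append]; exact min_le_right _ _

lemma cyl_structure (β : ℝ) (hβ : 1 < β) :
    ∀ w : List ℤ, (cyl β w).Nonempty →
      cyl β w = Set.Ico (leftpt β w) (leftpt β w + tval β w / β ^ w.length) := by
  have hbp : (0:ℝ) < β := by linarith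
  have hβ0 : β ≠ 0 := ne_of_gt hbp
  intro w
  induction w using List.reverseRecOn with
  | nil =>
    intro _
    ext x
    simp [mem_cyl, leftpt, tval_nil]
  | append_singleton u a ih =>
    intro hne
    obtain ⟨x0, hx0⟩ := hne
    have hx0u : x0 ∈ cyl β u := ((mem_cyl_append β x0 u a).mp hx0).1
    have hIH := ih ⟨x0, hx0u⟩
    set m := u.length with hm
    set l := leftpt β u with hl
    set t := tval β u with ht
    have hbm : (0:ℝ) < β ^ (m+1) := pow_pos hbp _
    have hbm' : (0:ℝ) < β ^ m := pow_pos hbp _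
    -- digit characterization on cyl u
    have hdigeq : ∀ y ∈ cyl β u, dig β y m = ⌊β ^ (m+1) * (y - l)⌋ := by
      intro y hy
      rw [dig, iterate_eq β hβ0 u y hy]
      congr 1
      rw [pow_succ]
      ring
    -- a is nonneg
    have ha : (0:ℝ) ≤ a := by
      have hd0 : dig β x0 m = a := ((mem_cyl_append β x0 u a).mp hx0).2
      have := dig_nonneg β x0 hbp hx0u.1 m
      rw [hd0] at this
      exact_mod_cast this
    have hmin : ∀ y : ℝ, min (β * t) ((a:ℝ) + 1) = a + min (β * t - a) 1 := by
      intro _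
      rcases le_total (β * t - (a:ℝ)) 1 with h | h
      · rw [min_eq_left h, min_eq_left (by linarith)]; ring
      · rw [min_eq_right h, min_eq_right (by linarith)]
    have hbmm : β ^ (m+1) * (t / β ^ m) = β * t := by
      rw [pow_succ]; field_simp
    ext x
    rw [mem_cyl_append, hIH]
    simp only [Set.mem_Ico, leftpt_append, tval_append, List.length_append,
      List.length_singleton, ← hm, ← hl, ← ht]
    have hdsum : (a:ℝ) / β ^ (m+1) + min (β * t - a) 1 / β ^ (m+1)
        = ((a:ℝ) + min (β * t - a) 1) / β ^ (m+1) := by rw [add_div]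
    constructor
    · rintro ⟨⟨hxl, hxr⟩, hd⟩
      have hxu : x ∈ cyl β u := by rw [hIH]; exact ⟨hxl, hxr⟩
      have hfl : ⌊β ^ (m+1) * (x - l)⌋ = a := by rw [← hdigeq x hxu]; exact hd
      obtain ⟨hge, hlt⟩ := Int.floor_eq_iff.mp hfl
      have h1 : (a:ℝ) / β ^ (m+1) ≤ x - l :=
        (div_le_iff₀ hbm).mpr (by rw [mul_comm]; exact hge)
      have h2 : β ^ (m+1) * (x - l) < β * t := by
        have : β ^ (m+1) * (x - l) < β ^ (m+1) * (t / β ^ m) :=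
          mul_lt_mul_of_pos_left (by linarith) hbm
        linarith [hbmm]
      have h3 : β ^ (m+1) * (x - l) < min (β * t) ((a:ℝ) + 1) := lt_min h2 (by exact_mod_cast hlt)
      have h4 : x - l < ((a:ℝ) + min (β * t - a) 1) / β ^ (m+1) := by
        rw [lt_div_iff₀ hbm, ← hmin x, mul_comm]
        exact h3
      constructor
      · linarith
      · linarith [hdsum]
    · rintro ⟨hge, hlt⟩
      have hge' : (a:ℝ) / β ^ (m+1) ≤ x - l := by linarith
      have hlt' : x - l < ((a:ℝ) + min (β * t - a) 1) / β ^ (m+1) := by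
        linarith [hdsum]
      have hminle : (a:ℝ) + min (β * t - a) 1 ≤ β * t := by
        have := min_le_left (β * t - (a:ℝ)) 1
        linarith
      have hxu' : l ≤ x ∧ x < l + t / β ^ m := by
        constructor
        · have : (0:ℝ) ≤ (a:ℝ) / β ^ (m+1) := div_nonneg ha hbm.le
          linarith
        · have h5 : x - l < β * t / β ^ (m+1) :=
            lt_of_lt_of_le hlt' ((div_le_div_iff_of_pos_right hbm).mpr hminle)
          have h6 : β * t / β ^ (m+1) = t / β ^ m := by
            rw [pow_succ]; field_simp
          linarith [h6 ▸ h5]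
      have hxu : x ∈ cyl β u := by rw [hIH]; exact ⟨hxu'.1, hxu'.2⟩
      refine ⟨hxu', ?_⟩
      rw [hdigeq x hxu]
      apply Int.floor_eq_iff.mpr
      constructor
      · rw [mul_comm, ← div_le_iff₀ hbm]; exact hge'
      · have hminle1 : (a:ℝ) + min (β * t - a) 1 ≤ (a:ℝ) + 1 := by
          have := min_le_right (β * t - (a:ℝ)) 1
          linarith
        have : x - l < ((a:ℝ) + 1) / β ^ (m+1) :=
          lt_of_lt_of_le hlt' ((div_le_div_iff_of_pos_right hbm).mpr hminle1)
        push_cast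
        rw [mul_comm, ← lt_div_iff₀ hbm]
        exact this

end Stmt6Aux
namespace Stmt6Aux

lemma tval_pos (β : ℝ) (hβ : 1 < β) (w : List ℤ) (hne : (cyl β w).Nonempty) :
    0 < tval β w := by
  obtain ⟨x, hx⟩ := hne
  rw [cyl_structure β hβ w ⟨x, hx⟩] at hx
  obtain ⟨h1, h2⟩ := hx
  have hbm : (0:ℝ) < β ^ w.length := pow_pos (by linarith) _
  have : 0 < tval β w / β ^ w.length := by linarith
  rcases div_pos_iff.mp this with ⟨h, _⟩ | ⟨_, h⟩
  · exact h
  · linarith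

lemma cylLen_eq (β : ℝ) (hβ : 1 < β) (w : List ℤ) (hne : (cyl β w).Nonempty) :
    cylLen β w = tval β w / β ^ w.length := by
  have ht := tval_pos β hβ w hne
  have hbm : (0:ℝ) < β ^ w.length := pow_pos (by linarith) _
  rw [cylLen, cyl_structure β hβ w hne, Real.volume_Ico, add_sub_cancel_left,
    ENNReal.toReal_ofReal (le_of_lt (div_pos ht hbm))]

lemma isFull_iff (β : ℝ) (hβ : 1 < β) (w : List ℤ) (hne : (cyl β w).Nonempty) :
    IsFull β w ↔ tval β w = 1 := by
  have hc : (β:ℝ) ^ w.length ≠ 0 := ne_of_gt (pow_pos (by linarith) _)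
  rw [IsFull, cylLen_eq β hβ w hne, div_eq_iff hc, inv_mul_cancel₀ hc]

end Stmt6Aux
namespace Stmt6Aux

lemma main (β : ℝ) (hβ : 1 < β) :
    ∀ n (w : Fin (n+1) → List ℤ), (∀ i, (w i).length = n) → (∀ i, Adm β (w i)) →
    (∀ i : Fin n, leftpt β (w i.succ) = leftpt β (w i.castSucc) + cylLen β (w i.castSucc)) →
    ∃ i, IsFull β (w i) := by
  have hbp : (0:ℝ) < β := by linarith
  intro n
  induction n with
  | zero =>
    intro w hlen hadm _
    refine ⟨0, ?_⟩
    have h0 : w 0 = [] := List.eq_nil_of_length_eq_zero (hlen 0)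
    have hne : (cyl β (w 0)).Nonempty := (adm_iff β _).mp (hadm 0)
    rw [isFull_iff β hβ _ hne, h0, tval_nil]
  | succ n ih =>
    intro w hlen hadm hconsec
    by_contra hfull
    push_neg at hfull
    have hbn : (0:ℝ) < β ^ n := pow_pos hbp n
    have hbn1 : (0:ℝ) < β ^ (n+1) := pow_pos hbp (n+1)
    have hwne : ∀ i, w i ≠ [] := fun i => by
      intro h; have := hlen i; rw [h] at this; simp at this
    obtain ⟨u, a, hsplit⟩ : ∃ (u : Fin (n+2) → List ℤ) (a : Fin (n+2) → ℤ),
        ∀ i, w i = u i ++ [a i] :=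
      ⟨fun i => (w i).dropLast, fun i => (w i).getLast (hwne i),
        fun i => (List.dropLast_append_getLast (hwne i)).symm⟩
    have hlu : ∀ i, (u i).length = n := fun i => by
      have h1 := hlen i
      rw [hsplit i, List.length_append, List.length_singleton] at h1
      omega
    have hnew : ∀ i, (cyl β (w i)).Nonempty := fun i => (adm_iff β _).mp (hadm i)
    have hneu : ∀ i, (cyl β (u i)).Nonempty := fun i => by
      obtain ⟨x, hx⟩ := hnew i
      rw [hsplit i] at hx
      exact ⟨x, ((mem_cyl_append β x (u i) (a i)).mp hx).1⟩
    have hadm_u : ∀ i, Adm β (u i) := fun i => (adm_iff β _).mpr (hneu i)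
    have htwpos : ∀ i, 0 < tval β (w i) := fun i => tval_pos β hβ _ (hnew i)
    have htupos : ∀ i, 0 < tval β (u i) := fun i => tval_pos β hβ _ (hneu i)
    have htule : ∀ i, tval β (u i) ≤ 1 := fun i => tval_le_one β (u i)
    have htwlt : ∀ i, tval β (w i) < 1 := fun i => by
      rcases lt_or_eq_of_le (tval_le_one β (w i)) with h | h
      · exact h
      · exact absurd ((isFull_iff β hβ _ (hnew i)).mpr h) (hfull i)
    have hawnn : ∀ i, (0:ℝ) ≤ (a i : ℝ) := fun i => by
      obtain ⟨x, hx⟩ := hnew i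
      have hx' := hx
      rw [hsplit i] at hx'
      have hd := ((mem_cyl_append β x (u i) (a i)).mp hx').2
      have h2 := dig_nonneg β x hbp hx.1 (u i).length
      rw [hd] at h2
      exact_mod_cast h2
    have htmin : ∀ i, tval β (w i) = min (β * tval β (u i) - a i) 1 := fun i => by
      conv_lhs => rw [hsplit i]
      exact tval_append β (u i) (a i)
    have htw : ∀ i, tval β (w i) = β * tval β (u i) - a i := fun i => by
      have h2 : min (β * tval β (u i) - (a i : ℝ)) 1 < 1 := (htmin i) ▸ htwlt i
      have h3 : β * tval β (u i) - (a i : ℝ) < 1 := by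
        by_contra hc
        push_neg at hc
        rw [min_eq_right hc] at h2
        exact lt_irrefl _ h2
      rw [htmin i, min_eq_left h3.le]
    have hlw : ∀ i, leftpt β (w i) = leftpt β (u i) + (a i : ℝ) / β ^ (n+1) := fun i => by
      conv_lhs => rw [hsplit i]
      rw [leftpt_append, hlu i]
    have hr : ∀ i, leftpt β (w i) + tval β (w i) / β ^ (n+1)
        = leftpt β (u i) + tval β (u i) / β ^ n := fun i => by
      rw [hlw i, htw i, pow_succ]
      field_simp
      ring
    have hclw : ∀ i, cylLen β (w i) = tval β (w i) / β ^ (n+1) := fun i => by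
      rw [cylLen_eq β hβ _ (hnew i), hlen i]
    have hclu : ∀ i, cylLen β (u i) = tval β (u i) / β ^ n := fun i => by
      rw [cylLen_eq β hβ _ (hneu i), hlu i]
    have hcons' : ∀ i : Fin (n+1), leftpt β (w i.succ)
        = leftpt β (u i.castSucc) + tval β (u i.castSucc) / β ^ n := fun i => by
      rw [hconsec i, hclw]
      exact hr i.castSucc
    -- key step: parents are consecutive and the appended digit is 0
    have hkey : ∀ i : Fin (n+1),
        leftpt β (u i.succ) = leftpt β (u i.castSucc) + tval β (u i.castSucc) / β ^ n
        ∧ a i.succ = 0 := by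
      intro i
      have hR : leftpt β (w i.succ)
          = leftpt β (u i.castSucc) + tval β (u i.castSucc) / β ^ n := hcons' i
      have hLle : leftpt β (u i.succ) ≤ leftpt β (w i.succ) := by
        rw [hlw i.succ]
        have := div_nonneg (hawnn i.succ) hbn1.le
        linarith
      have hLeq : leftpt β (u i.succ)
          = leftpt β (u i.castSucc) + tval β (u i.castSucc) / β ^ n := by
        rcases lt_or_eq_of_le (hR ▸ hLle) with hLlt | hLeq'
        · exfalso
          -- overlap argument
          obtain ⟨x1, hx1⟩ := hnew i.succ
          have hx1' := hx1
          rw [hsplit i.succ] at hx1'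
          have hx1u : x1 ∈ cyl β (u i.succ) :=
            ((mem_cyl_append β x1 (u i.succ) (a i.succ)).mp hx1').1
          have hx1ge : leftpt β (w i.succ) ≤ x1 := by
            have hx1w := hx1
            rw [cyl_structure β hβ _ (hnew i.succ)] at hx1w
            exact hx1w.1
          have hx1lt : x1 < leftpt β (u i.succ) + tval β (u i.succ) / β ^ n := by
            have hx1u' := hx1u
            rw [cyl_structure β hβ _ (hneu i.succ), hlu] at hx1u'
            exact hx1u'.2
          have hRub : leftpt β (u i.castSucc) + tval β (u i.castSucc) / β ^ n
              < leftpt β (u i.succ) + tval β (u i.succ) / β ^ n := by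
            rw [← hR]; exact lt_of_le_of_lt hx1ge hx1lt
          have htc := div_pos (htupos i.castSucc) hbn
          set p := max (leftpt β (u i.castSucc)) (leftpt β (u i.succ)) with hp
          have hpu1 : p ∈ cyl β (u i.castSucc) := by
            rw [cyl_structure β hβ _ (hneu i.castSucc), hlu]
            exact ⟨le_max_left _ _, max_lt (by linarith) hLlt⟩
          have hpu2 : p ∈ cyl β (u i.succ) := by
            rw [cyl_structure β hβ _ (hneu i.succ), hlu]
            refine ⟨le_max_right _ _, max_lt ?_ ?_⟩
            · linarith
            · have htc2 := div_pos (htupos i.succ) hbn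
              linarith
          have hword : u i.castSucc = u i.succ :=
            word_eq_of_mem β p _ _ hpu1 hpu2 (by rw [hlu, hlu])
          have hLl : leftpt β (u i.succ) = leftpt β (u i.castSucc) := by rw [hword]
          have hav : (a i.succ : ℝ) / β ^ (n+1) = tval β (u i.castSucc) / β ^ n := by
            have h5 := hlw i.succ
            rw [hR, hLl] at h5
            linarith
          have hts : tval β (u i.succ) = tval β (u i.castSucc) := by rw [hword]
          have hzero : tval β (w i.succ) = 0 := by
            rw [htw i.succ, hts]
            have h6 : (a i.succ : ℝ) = β * tval β (u i.castSucc) := by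
              rw [div_eq_div_iff (ne_of_gt hbn1) (ne_of_gt hbn), pow_succ] at hav
              have h7 := mul_right_cancel₀ (ne_of_gt hbn) (hav.trans (by ring :
                tval β (u i.castSucc) * (β ^ n * β) = (β * tval β (u i.castSucc)) * β ^ n))
              linarith
            linarith
          exact absurd hzero (ne_of_gt (htwpos i.succ))
        · exact hLeq'
      have ha0 : a i.succ = 0 := by
        have h5 := hlw i.succ
        rw [hR, hLeq] at h5
        have h6 : (a i.succ : ℝ) / β ^ (n+1) = 0 := by linarith
        have h7 : (a i.succ : ℝ) = 0 := by
          field_simp at h6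
          rw [mul_zero] at h6
          exact_mod_cast h6
        exact_mod_cast h7
      exact ⟨hLeq, ha0⟩
    -- all parents u (i.succ) are non-full
    have hufull : ∀ i : Fin (n+1), ¬ IsFull β (u i.succ) := by
      intro i hf
      have h1 : tval β (u i.succ) = 1 := (isFull_iff β hβ _ (hneu i.succ)).mp hf
      have h2 := htw i.succ
      rw [(hkey i).2, h1] at h2
      push_cast at h2
      have := htwlt i.succ
      rw [h2] at this
      linarith
    -- apply induction hypothesis to the shifted parents
    obtain ⟨j, hj⟩ := ih (fun j => u j.succ) (fun j => hlu _) (fun j => hadm_u _)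
      (fun j => by
        have e : (j.castSucc).succ = (j.succ).castSucc := Fin.succ_castSucc j
        show leftpt β (u (j.succ).succ)
          = leftpt β (u (j.castSucc).succ) + cylLen β (u (j.castSucc).succ)
        rw [hclu, e]
        exact (hkey j.succ).1)
    exact hufull j hj

end Stmt6Aux
theorem stmt6 (β : ℝ) (hβ : 1 < β) (n : ℕ) (hn : 1 ≤ n)
    (w : Fin (n + 1) → List ℤ) (hlen : ∀ i, (w i).length = n)
    (hadm : ∀ i, Adm β (w i))
    (hconsec : ∀ i : Fin n,
      leftpt β (w i.succ) = leftpt β (w i.castSucc) + cylLen β (w i.castSucc)) :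
    ∃ i, IsFull β (w i) := by
  exact Stmt6Aux.main β hβ n w hlen hadm hconsec
end

section
/- Fix 0 < ε < 1 and β > 1, and let n_0 be an integer such that 2n²β < β^{(n-1)ε} for all n ≥ n_0. Then for every interval J ⊆ [0,1] of length r with 0 < r < 2n_0 β^{-n_0}, there exists a full cylinder I_n contained in J satisfying r ≥ |I_n| > r^{1+ε}. -/
open MeasureTheory Filter Real Set

noncomputable section
namespace Stmt8

variable {β : ℝ}

lemma leftpt_nil : leftpt β [] = 0 := by simp [leftpt]

lemma leftpt_cons (hβ : 0 < β) (d : ℤ) (w : List ℤ) :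
    leftpt β (d :: w) = ((d : ℝ) + leftpt β w) / β := by
  unfold leftpt
  simp only [List.length_cons]
  rw [Fin.sum_univ_succ]
  simp only [List.get_cons_succ, List.get_cons_zero]
  rw [add_div, Finset.sum_div]
  have h1 : ((d:ℝ)) / β ^ ((0:Fin (w.length+1)).val + 1) = (d:ℝ)/β := by norm_num
  rw [h1]
  congr 1
  apply Finset.sum_congr rfl
  intro i _
  rw [div_div, Fin.val_succ, pow_succ]
  simp

lemma leftpt_append (hβ : 0 < β) (u v : List ℤ) :
    leftpt β (u ++ v) = leftpt β u + (β ^ u.length)⁻¹ * leftpt β v := by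
  induction u with
  | nil => simp [leftpt_nil]
  | cons d u ih =>
      rw [List.cons_append, leftpt_cons hβ, leftpt_cons hβ, ih]
      rw [show (d::u).length = u.length + 1 from rfl]
      field_simp
      ring

lemma leftpt_singleton (hβ : 0 < β) (c : ℤ) : leftpt β [c] = c / β := by
  rw [leftpt_cons hβ, leftpt_nil]; ring

lemma leftpt_nonneg (hβ : 0 < β) {w : List ℤ} (hw : ∀ d ∈ w, 0 ≤ d) :
    0 ≤ leftpt β w := by
  induction w with
  | nil => simp [leftpt_nil]
  | cons d u ih =>
      rw [leftpt_cons hβ]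
      have h1 : (0:ℝ) ≤ d := by exact_mod_cast hw d (by simp)
      have h2 : 0 ≤ leftpt β u := ih fun x hx => hw x (by simp [hx])
      positivity

lemma mem_cyl_cons {x : ℝ} {d : ℤ} {w : List ℤ} :
    x ∈ cyl β (d :: w) ↔ x ∈ Set.Ico (0:ℝ) 1 ∧ ⌊β * x⌋ = d ∧ bT β x ∈ cyl β w := by
  constructor
  · rintro ⟨hx, hdig⟩
    refine ⟨hx, ?_, ?_, ?_⟩
    · have := hdig ⟨0, by simp⟩
      simpa [dig] using this
    · exact ⟨Int.fract_nonneg _, Int.fract_lt_one _⟩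
    · intro i
      have := hdig i.succ
      simpa [dig, Function.iterate_succ_apply, bT] using this
  · rintro ⟨hx, h0, -, hdig⟩
    refine ⟨hx, ?_⟩
    intro i
    refine Fin.cases ?_ ?_ i
    · simpa [dig] using h0
    · intro j
      have := hdig j
      simpa [dig, Function.iterate_succ_apply, bT] using this

end Stmt8
noncomputable section
namespace Stmt8
variable {β : ℝ}

/-- Suffix condition guaranteeing a full cylinder. -/
def goodW (β : ℝ) (w : List ℤ) : Prop :=
  (∀ d ∈ w, 0 ≤ d) ∧ ∀ j : ℕ, leftpt β (w.drop j) + (β ^ (w.length - j))⁻¹ ≤ 1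

lemma goodW_tail {d : ℤ} {w : List ℤ} (h : goodW β (d :: w)) : goodW β w := by
  refine ⟨fun x hx => h.1 x (by simp [hx]), fun j => ?_⟩
  have := h.2 (j+1)
  simpa using this

lemma goodW_head_nonneg {d : ℤ} {w : List ℤ} (h : goodW β (d :: w)) : (0:ℝ) ≤ d := by
  exact_mod_cast h.1 d (by simp)

lemma cyl_nil : cyl β [] = Set.Ico (0:ℝ) 1 := by
  ext x; simp [cyl]

lemma cyl_eq_Ico (hβ : 1 < β) : ∀ (w : List ℤ), goodW β w →
    cyl β w = Set.Ico (leftpt β w) (leftpt β w + (β ^ w.length)⁻¹) := by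
  have hβ0 : 0 < β := lt_trans one_pos hβ
  intro w
  induction w with
  | nil => intro _; rw [cyl_nil]; simp [leftpt_nil]
  | cons d w ih =>
    intro hg
    have hgw := goodW_tail hg
    have hIH := ih hgw
    have hLw0 : 0 ≤ leftpt β w := leftpt_nonneg hβ0 hgw.1
    have hLw1 : leftpt β w + (β ^ w.length)⁻¹ ≤ 1 := by simpa using hgw.2 0
    have hd0 : (0:ℝ) ≤ d := goodW_head_nonneg hg
    have htop : leftpt β (d :: w) + (β ^ (d :: w).length)⁻¹ ≤ 1 := by simpa using hg.2 0
    have hlen : (β ^ (d::w).length : ℝ)⁻¹ = (β ^ w.length)⁻¹ / β := by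
      rw [show (d::w).length = w.length + 1 from rfl, pow_succ]
      field_simp
    have hL : leftpt β (d :: w) = ((d:ℝ) + leftpt β w) / β := leftpt_cons hβ0 d w
    ext x
    rw [mem_cyl_cons, hIH]
    constructor
    · rintro ⟨hx01, hfl, hfr⟩
      have hbtx : bT β x = β * x - (d:ℝ) := by simp [bT, Int.fract, hfl]
      rw [hbtx] at hfr
      obtain ⟨h1, h2⟩ := hfr
      constructor
      · rw [hL, div_le_iff₀ hβ0]; linarith [h1]
      · rw [hL, hlen]
        rw [← add_div, lt_div_iff₀ hβ0]
        linarith [h2]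
    · rintro ⟨h1, h2⟩
      rw [hL] at h1
      rw [hL, hlen, ← add_div] at h2
      have hb1 : (d:ℝ) + leftpt β w ≤ β * x := by
        rw [div_le_iff₀ hβ0] at h1; linarith [h1]
      have hb2 : β * x < (d:ℝ) + (leftpt β w + (β ^ w.length)⁻¹) := by
        rw [lt_div_iff₀ hβ0] at h2; linarith [h2]
      have hfl : ⌊β * x⌋ = d := by
        rw [Int.floor_eq_iff]
        constructor
        · linarith
        · push_cast
          have : (β ^ w.length : ℝ)⁻¹ > 0 := by positivity
          linarith
      have hbtx : bT β x = β * x - (d:ℝ) := by simp [bT, Int.fract, hfl]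
      refine ⟨?_, hfl, ?_⟩
      · constructor
        · have : 0 ≤ leftpt β (d::w) := leftpt_nonneg hβ0 hg.1
          linarith [hL ▸ this, h1]
        · have hpos : (0:ℝ) < (β ^ (d::w).length)⁻¹ := by positivity
          calc x < leftpt β (d::w) + (β ^ (d::w).length)⁻¹ := by rw [hL, hlen, ← add_div]; exact h2
            _ ≤ 1 := htop
      · rw [hbtx]
        exact ⟨by linarith, by linarith⟩

lemma goodW_append (hβ : 1 < β) {u v : List ℤ} (hu : goodW β u) (hv : goodW β v) :
    goodW β (u ++ v) := by
  have hβ0 : 0 < β := lt_trans one_pos hβ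
  constructor
  · intro d hd
    rcases List.mem_append.mp hd with h | h
    · exact hu.1 d h
    · exact hv.1 d h
  · intro j
    rcases le_or_gt u.length j with hj | hj
    · -- j ≥ |u| : condition from v
      have hdrop : (u ++ v).drop j = v.drop (j - u.length) := by
        rw [List.drop_append, List.drop_eq_nil_of_le hj, List.nil_append]
      rw [hdrop]
      have := hv.2 (j - u.length)
      have hlen2 : (u ++ v).length - j = v.length - (j - u.length) := by
        simp [List.length_append]; omega
      rw [hlen2]
      exact this
    · -- j < |u|
      have hdrop : (u ++ v).drop j = u.drop j ++ v := List.drop_append_of_le_length hj.le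
      rw [hdrop]
      rw [leftpt_append hβ0]
      have hdl : (u.drop j).length = u.length - j := List.length_drop
      have hll : (u ++ v).length - j = (u.length - j) + v.length := by
        simp [List.length_append]; omega
      rw [hdl, hll, pow_add, mul_inv]
      have hv0 : leftpt β v + (β ^ v.length)⁻¹ ≤ 1 := by simpa using hv.2 0
      have hu0 : leftpt β (u.drop j) + (β ^ (u.length - j))⁻¹ ≤ 1 := hu.2 j
      have hbpos : (0:ℝ) < (β ^ (u.length - j))⁻¹ := by positivity
      calc leftpt β (u.drop j) + (β ^ (u.length - j))⁻¹ * leftpt β v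
            + (β ^ (u.length - j))⁻¹ * (β ^ v.length)⁻¹
          = leftpt β (u.drop j) + (β ^ (u.length - j))⁻¹ * (leftpt β v + (β ^ v.length)⁻¹) := by ring
        _ ≤ leftpt β (u.drop j) + (β ^ (u.length - j))⁻¹ * 1 := by
              have := mul_le_mul_of_nonneg_left hv0 hbpos.le
              linarith
        _ ≤ 1 := by rw [mul_one]; exact hu0

end Stmt8
noncomputable section
namespace Stmt8
variable {β : ℝ}

lemma adm_isfull_of_goodW (hβ : 1 < β) {w : List ℤ} (hw : goodW β w) :
    Adm β w ∧ IsFull β w := by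
  have hβ0 : 0 < β := lt_trans one_pos hβ
  have hc := cyl_eq_Ico hβ w hw
  have hpos : (0:ℝ) < (β ^ w.length)⁻¹ := by positivity
  have hmem : leftpt β w ∈ cyl β w := by
    rw [hc]; exact ⟨le_refl _, by linarith⟩
  constructor
  · exact ⟨leftpt β w, hmem.1, hmem.2⟩
  · unfold IsFull cylLen
    rw [hc, Real.volume_Ico]
    simp [ENNReal.toReal_ofReal hpos.le]

/-- The word of the first k digits of x. -/
def dw (β x : ℝ) (k : ℕ) : List ℤ := (List.range k).map (dig β x)

@[simp] lemma dw_length (x : ℝ) (k : ℕ) : (dw β x k).length = k := by simp [dw]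

lemma dw_succ (x : ℝ) (k : ℕ) : dw β x (k+1) = dw β x k ++ [dig β x k] := by
  simp [dw, List.range_succ]

lemma iterate_mem (x : ℝ) (hx : x ∈ Set.Ico (0:ℝ) 1) (j : ℕ) :
    (bT β)^[j] x ∈ Set.Ico (0:ℝ) 1 := by
  cases j with
  | zero => exact hx
  | succ m =>
    rw [Function.iterate_succ_apply']
    exact ⟨Int.fract_nonneg _, Int.fract_lt_one _⟩

lemma dig_nonneg (hβ : 1 < β) {x : ℝ} (hx : x ∈ Set.Ico (0:ℝ) 1) (j : ℕ) :
    0 ≤ dig β x j := by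
  have := (iterate_mem (β:=β) x hx j).1
  exact Int.floor_nonneg.mpr (by positivity)

lemma dw_nonneg (hβ : 1 < β) {x : ℝ} (hx : x ∈ Set.Ico (0:ℝ) 1) (k : ℕ) :
    ∀ d ∈ dw β x k, 0 ≤ d := by
  intro d hd
  simp [dw] at hd
  obtain ⟨j, -, hj⟩ := hd
  exact hj ▸ dig_nonneg hβ hx j

lemma dig_add (x : ℝ) (j i : ℕ) : dig β x (j + i) = dig β ((bT β)^[j] x) i := by
  unfold dig
  rw [show j + i = i + j by omega, Function.iterate_add_apply]

lemma dw_telescope (hβ : 1 < β) (x : ℝ) (k : ℕ) :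
    leftpt β (dw β x k) + (β ^ k)⁻¹ * (bT β)^[k] x = x := by
  have hβ0 : 0 < β := lt_trans one_pos hβ
  induction k with
  | zero => simp [dw, leftpt_nil]
  | succ m ih =>
    rw [dw_succ, leftpt_append hβ0, leftpt_singleton hβ0, dw_length,
        Function.iterate_succ_apply']
    have hfr : bT β ((bT β)^[m] x) = β * (bT β)^[m] x - (dig β x m : ℝ) := by
      unfold bT dig Int.fract; rfl
    rw [hfr, pow_succ, mul_inv]
    have hb : β⁻¹ * β = 1 := inv_mul_cancel₀ (ne_of_gt hβ0)
    linear_combination ih + (β ^ m)⁻¹ * ((bT β)^[m] x) * hb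

lemma dw_drop (x : ℝ) (n j : ℕ) (h : j ≤ n) :
    (dw β x n).drop j = dw β ((bT β)^[j] x) (n - j) := by
  unfold dw
  conv_lhs => rw [show n = j + (n - j) by omega]
  rw [List.range_add, List.map_append, List.drop_append]
  simp only [List.length_map, List.length_range]
  rw [List.drop_eq_nil_of_le (by simp), List.nil_append]
  simp only [List.length_map, List.length_range, Nat.sub_self, List.drop_zero, List.map_map]
  apply List.map_congr_left
  intro i hi
  simp only [Function.comp_apply]
  exact dig_add x j i

end Stmt8
noncomputable section
namespace Stmt8
variable {β : ℝ}

lemma leftpt_zero {w : List ℤ} (h : ∀ d ∈ w, d = 0) : leftpt β w = 0 := by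
  induction w with
  | nil => simp [leftpt_nil]
  | cons d u ih =>
      unfold leftpt
      apply Finset.sum_eq_zero
      intro i _
      have hz : (d::u).get i = 0 := h _ (List.get_mem (d::u) i)
      rw [hz]
      simp

lemma leftpt_dw_drop (hβ : 1 < β) (x : ℝ) {n j : ℕ} (h : j ≤ n) :
    leftpt β ((dw β x n).drop j)
      = (bT β)^[j] x - (β ^ (n - j))⁻¹ * (bT β)^[n] x := by
  rw [dw_drop x n j h]
  have ht := dw_telescope hβ ((bT β)^[j] x) (n - j)
  rw [← Function.iterate_add_apply, show n - j + j = n by omega] at ht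
  linarith

/-- Decrementing the last digit gives a good word. -/
lemma goodW_dec (hβ : 1 < β) {x : ℝ} (hx : x ∈ Set.Ico (0:ℝ) 1) (m : ℕ)
    (hc : 1 ≤ dig β x m) :
    goodW β (dw β x m ++ [dig β x m - 1]) ∧
    leftpt β (dw β x m ++ [dig β x m - 1]) + (β ^ (m+1))⁻¹ = leftpt β (dw β x (m+1)) := by
  have hβ0 : 0 < β := lt_trans one_pos hβ
  have hβne : β ≠ 0 := ne_of_gt hβ0
  set c := dig β x m with hcdef
  constructor
  · constructor
    · intro d hd
      rcases List.mem_append.mp hd with h | h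
      · exact dw_nonneg hβ hx m d h
      · simp at h; omega
    · intro j
      rcases le_or_gt (m+1) j with hj | hj
      · have h1 : (dw β x m ++ [c - 1]).drop j = [] :=
          List.drop_eq_nil_of_le (by simp; omega)
        have h2 : (dw β x m ++ [c-1]).length - j = 0 := by simp; omega
        rw [h1, h2, leftpt_nil]
        norm_num
      · have hjm : j ≤ m := by omega
        have h1 : (dw β x m ++ [c - 1]).drop j = (dw β x m).drop j ++ [c-1] := by
          rw [List.drop_append]
          have : j - (dw β x m).length = 0 := by simp; omega
          rw [this, List.drop_zero]
        have h2 : (dw β x m ++ [c-1]).length - j = (m - j) + 1 := by simp; omega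
        rw [h1, h2, leftpt_append hβ0, leftpt_singleton hβ0]
        have hdl : ((dw β x m).drop j).length = m - j := by simp
        rw [hdl]
        have hlp := leftpt_dw_drop hβ x hjm
        rw [hlp]
        set t : ℝ := (β ^ (m - j))⁻¹ with htdef
        have ht : 0 < t := by positivity
        set y : ℝ := (bT β)^[j] x with hydef
        set T : ℝ := (bT β)^[m] x with hTdef
        have hy1 : y < 1 := (iterate_mem x hx j).2
        have hcle : (c:ℝ) ≤ β * T := Int.floor_le _
        have hexp : (β ^ (m - j + 1))⁻¹ = t * β⁻¹ := by
          rw [pow_succ, mul_inv]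
        rw [hexp]
        have e1 : t * (((c:ℝ) - 1)/β) + t * β⁻¹ = t * ((c:ℝ)/β) := by
          field_simp
          ring
        have h3 : (c:ℝ)/β ≤ T := by
          rw [div_le_iff₀ hβ0]; nlinarith
        have e2 : t * ((c:ℝ)/β) ≤ t * T := mul_le_mul_of_nonneg_left h3 ht.le
        push_cast
        push_cast at e1 e2
        linarith
  · rw [dw_succ, leftpt_append hβ0, leftpt_append hβ0, leftpt_singleton hβ0,
        leftpt_singleton hβ0, dw_length]
    rw [pow_succ, mul_inv]
    push_cast
    field_simp
    ring

lemma exists_last_digit (hβ : 1 < β) {x : ℝ} (hx : x ∈ Set.Ico (0:ℝ) 1) {n : ℕ}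
    (hn : 1 ≤ n) (hxn : (β ^ n)⁻¹ ≤ x) :
    ∃ k, 1 ≤ k ∧ k ≤ n ∧ 1 ≤ dig β x (k-1) ∧
      leftpt β (dw β x k) = leftpt β (dw β x n) := by
  classical
  have hβ0 : 0 < β := lt_trans one_pos hβ
  -- there is a nonzero digit below n
  have hex : ∃ j, j ≤ n - 1 ∧ 1 ≤ dig β x j := by
    by_contra hcon
    push_neg at hcon
    have hzero : ∀ d ∈ dw β x n, d = 0 := by
      intro d hd
      simp [dw] at hd
      obtain ⟨j, hjn, hj⟩ := hd
      have h1 := dig_nonneg hβ hx j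
      have h2 := hcon j (by omega)
      omega
    have hlz : leftpt β (dw β x n) = 0 := leftpt_zero hzero
    have ht := dw_telescope hβ x n
    rw [hlz] at ht
    have hT1 : (bT β)^[n] x < 1 := (iterate_mem x hx n).2
    have hp : (0:ℝ) < (β ^ n)⁻¹ := by positivity
    nlinarith
  obtain ⟨j1, hj1n, hj1⟩ := hex
  set P : ℕ → Prop := fun j => 1 ≤ dig β x j with hP
  have hPd : DecidablePred P := fun j => by exact inferInstance
  set j0 := Nat.findGreatest P (n-1) with hj0def
  have hspec : P j0 := Nat.findGreatest_spec (m := j1) hj1n hj1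
  have hle : j0 ≤ n - 1 := Nat.findGreatest_le _
  have hgr : ∀ i, j0 < i → i ≤ n - 1 → ¬ P i := fun i h1 h2 =>
    Nat.findGreatest_is_greatest h1 h2
  refine ⟨j0 + 1, by omega, by omega, by simpa using hspec, ?_⟩
  -- digits from j0+1 to n-1 are zero
  have hzero : ∀ i, j0 + 1 ≤ i → i < n → dig β x i = 0 := by
    intro i h1 h2
    have := hgr i (by omega) (by omega)
    have hnn := dig_nonneg hβ hx i
    simp only [hP] at this
    omega
  -- leftpt stable
  have haux : ∀ m, j0 + 1 ≤ m → m ≤ n → leftpt β (dw β x m) = leftpt β (dw β x (j0+1)) := by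
    intro m
    induction m with
    | zero => omega
    | succ p ih =>
      intro h1 h2
      rcases Nat.eq_or_lt_of_le h1 with h | h
      · rw [← h]
      · have hp1 : j0 + 1 ≤ p := by omega
        rw [dw_succ, leftpt_append hβ0, leftpt_singleton hβ0]
        rw [hzero p hp1 (by omega)]
        simp [ih hp1 (by omega)]
  exact (haux n (by omega) (le_refl n)).symm

end Stmt8
noncomputable section
namespace Stmt8
variable {β : ℝ}

lemma inv_pow_le_one (hβ : 1 < β) (k : ℕ) : ((β:ℝ) ^ k)⁻¹ ≤ 1 := by
  rw [inv_le_one_iff₀]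
  right
  exact one_le_pow₀ hβ.le

/-- There are full cylinders of every order arbitrarily close to 1. -/
lemma near_one (hβ : 1 < β) : ∀ m : ℕ, ∀ δ : ℝ, 0 < δ →
    ∃ w : List ℤ, goodW β w ∧ w.length = m ∧
      1 - m * (β ^ m)⁻¹ - δ < leftpt β w + (β ^ m)⁻¹ := by
  have hβ0 : 0 < β := lt_trans one_pos hβ
  intro m
  induction m using Nat.strong_induction_on with
  | _ m IH =>
    intro δ hδ
    rcases Nat.eq_zero_or_pos m with hm | hm
    · subst hm
      refine ⟨[], ⟨by simp, fun j => by simp [leftpt_nil]⟩, rfl, ?_⟩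
      simp [leftpt_nil]; linarith
    · -- choose x close to 1
      set x : ℝ := max (1 - δ/2) ((β ^ m)⁻¹) with hxdef
      have hbm1 : (β ^ m)⁻¹ < 1 := by
        rw [inv_lt_one_iff₀]
        right
        exact one_lt_pow₀ hβ (by omega)
      have hx01 : x ∈ Set.Ico (0:ℝ) 1 := by
        constructor
        · have : (0:ℝ) < (β ^ m)⁻¹ := by positivity
          have := le_max_right (1 - δ/2) ((β ^ m)⁻¹)
          linarith
        · apply max_lt <;> linarith
      have hxn : (β ^ m)⁻¹ ≤ x := le_max_right _ _
      have hxd : 1 - δ/2 ≤ x := le_max_left _ _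
      obtain ⟨k, hk1, hkm, hdig, hlp⟩ := exists_last_digit hβ hx01 hm hxn
      -- decrement digit k-1
      obtain ⟨hgu, hru⟩ := goodW_dec hβ hx01 (k-1) hdig
      rw [show k - 1 + 1 = k by omega] at hru
      set u : List ℤ := dw β x (k-1) ++ [dig β x (k-1) - 1] with hudef
      have hulen : u.length = k := by simp [hudef]; omega
      -- position of the right endpoint of u's cylinder
      have hp : leftpt β u + (β ^ k)⁻¹ = leftpt β (dw β x m) := by rw [hru, hlp]
      have htel := dw_telescope hβ x m
      have hTm : (bT β)^[m] x < 1 := (iterate_mem x hx01 m).2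
      have hTm0 : 0 ≤ (bT β)^[m] x := (iterate_mem x hx01 m).1
      have hbmpos : (0:ℝ) < (β ^ m)⁻¹ := by positivity
      have hpx : x - (β ^ m)⁻¹ < leftpt β u + (β ^ k)⁻¹ := by
        rw [hp]; nlinarith
      -- inductive word for the remaining length
      obtain ⟨v, hgv, hvlen, hv⟩ := IH (m - k) (by omega) (δ/2) (by linarith)
      rw [show ((m - k : ℕ) : ℝ) = (m:ℝ) - (k:ℝ) by push_cast [Nat.cast_sub hkm]; ring] at hv
      refine ⟨u ++ v, goodW_append hβ hgu hgv, by simp [hulen, hvlen]; omega, ?_⟩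
      have hlw : leftpt β (u ++ v) = leftpt β u + (β ^ k)⁻¹ * leftpt β v := by
        rw [leftpt_append hβ0, hulen]
      have hprod : ((β:ℝ) ^ k)⁻¹ * (β ^ (m - k))⁻¹ = (β ^ m)⁻¹ := by
        rw [← mul_inv, ← pow_add]
        congr 2
        omega
      have hlen2 : (u ++ v).length = m := by simp [hulen, hvlen]; omega
      rw [hlw]
      have htk : (0:ℝ) < (β ^ k)⁻¹ := by positivity
      have htk1 : ((β:ℝ) ^ k)⁻¹ ≤ 1 := inv_pow_le_one hβ k
      -- multiply IH bound by (β^k)⁻¹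
      have hmul : (β ^ k)⁻¹ * (1 - ((m:ℝ) - (k:ℝ)) * (β ^ (m-k))⁻¹ - δ/2)
          < (β ^ k)⁻¹ * (leftpt β v + (β ^ (m-k))⁻¹) :=
        mul_lt_mul_of_pos_left hv htk
      have hexpand : (β ^ k)⁻¹ * (1 - ((m:ℝ) - (k:ℝ)) * (β ^ (m-k))⁻¹ - δ/2)
          = (β ^ k)⁻¹ - ((m:ℝ) - (k:ℝ)) * (β ^ m)⁻¹ - (β ^ k)⁻¹ * (δ/2) := by
        rw [mul_sub, mul_sub]
        rw [show (β ^ k)⁻¹ * (((m:ℝ) - k) * (β ^ (m-k))⁻¹)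
            = ((m:ℝ) - k) * ((β ^ k)⁻¹ * (β ^ (m-k))⁻¹) by ring, hprod]
        ring
      have hdpos : 0 < δ/2 := by linarith
      have hkd : (β ^ k)⁻¹ * (δ/2) ≤ δ/2 := by nlinarith
      have hmainlhs : leftpt β u + (β ^ k)⁻¹ * (leftpt β v + (β ^ (m-k))⁻¹)
      = leftpt β u + (β ^ k)⁻¹ * leftpt β v + (β ^ k)⁻¹ * (β ^ (m-k))⁻¹ := by ring
      have hk1r : (1:ℝ) ≤ (k:ℝ) := by exact_mod_cast hk1
      have hmk : ((m:ℝ) - k) + 1 ≤ (m:ℝ) := by linarith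
      -- combine
      have := hmul
      rw [hexpand] at this
      rw [hprod] at hmainlhs
      nlinarith [hbmpos, hmainlhs]
  
end Stmt8
noncomputable section
namespace Stmt8
variable {β : ℝ}

lemma goodW_top (hg : goodW β w) : leftpt β w + (β ^ w.length)⁻¹ ≤ 1 := by
  simpa using hg.2 0

/-- Main geometric lemma: a full cylinder of order n inside [a, a+r]. -/
lemma full_in_interval (hβ : 1 < β) {n : ℕ} (hn : 1 ≤ n) {a r : ℝ} (hr0 : 0 < r)
    (hfit : ((n:ℝ) + 2) * (β ^ n)⁻¹ ≤ r) (hJ : Set.Icc a (a+r) ⊆ Set.Icc (0:ℝ) 1) :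
    ∃ w : List ℤ, goodW β w ∧ w.length = n ∧
      a ≤ leftpt β w ∧ leftpt β w + (β ^ n)⁻¹ ≤ a + r := by
  have hβ0 : 0 < β := lt_trans one_pos hβ
  have hbn : (0:ℝ) < (β ^ n)⁻¹ := by positivity
  have ha0 : 0 ≤ a := (hJ ⟨le_refl a, by linarith⟩).1
  have har1 : a + r ≤ 1 := (hJ ⟨by linarith, le_refl _⟩).2
  rcases eq_or_lt_of_le har1 with heq | hlt
  · -- a + r = 1
    obtain ⟨w, hg, hlen, hb⟩ := near_one hβ n ((β ^ n)⁻¹) hbn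
    refine ⟨w, hg, hlen, ?_, ?_⟩
    · nlinarith
    · rw [heq, ← hlen]; exact goodW_top hg
  · -- x := a + r < 1
    set x : ℝ := a + r with hxdef
    have hx01 : x ∈ Set.Ico (0:ℝ) 1 := ⟨by linarith, hlt⟩
    have hxn : (β ^ n)⁻¹ ≤ x := by nlinarith
    obtain ⟨k, hk1, hkn, hdig, hlp⟩ := exists_last_digit hβ hx01 hn hxn
    obtain ⟨hgu, hru⟩ := goodW_dec hβ hx01 (k-1) hdig
    rw [show k - 1 + 1 = k by omega] at hru
    set u : List ℤ := dw β x (k-1) ++ [dig β x (k-1) - 1] with hudef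
    have hulen : u.length = k := by simp [hudef]; omega
    have hp : leftpt β u + (β ^ k)⁻¹ = leftpt β (dw β x n) := by rw [hru, hlp]
    have htel := dw_telescope hβ x n
    have hTn : (bT β)^[n] x < 1 := (iterate_mem x hx01 n).2
    have hTn0 : 0 ≤ (bT β)^[n] x := (iterate_mem x hx01 n).1
    have hpx1 : x - (β ^ n)⁻¹ < leftpt β u + (β ^ k)⁻¹ := by rw [hp]; nlinarith
    have hpx2 : leftpt β u + (β ^ k)⁻¹ ≤ x := by rw [hp]; nlinarith
    obtain ⟨v, hgv, hvlen, hv⟩ := near_one hβ (n - k) ((β ^ n)⁻¹) hbn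
    rw [show ((n - k : ℕ) : ℝ) = (n:ℝ) - (k:ℝ) by push_cast [Nat.cast_sub hkn]; ring] at hv
    have hlw : leftpt β (u ++ v) = leftpt β u + (β ^ k)⁻¹ * leftpt β v := by
      rw [leftpt_append hβ0, hulen]
    have hprod : ((β:ℝ) ^ k)⁻¹ * (β ^ (n - k))⁻¹ = (β ^ n)⁻¹ := by
      rw [← mul_inv, ← pow_add]; congr 2; omega
    have htk : (0:ℝ) < (β ^ k)⁻¹ := by positivity
    have htk1 : ((β:ℝ) ^ k)⁻¹ ≤ 1 := inv_pow_le_one hβ k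
    have hbnk : (0:ℝ) < (β ^ (n-k))⁻¹ := by positivity
    have hvtop : leftpt β v + (β ^ (n-k))⁻¹ ≤ 1 := by rw [← hvlen]; exact goodW_top hgv
    have hk1r : (1:ℝ) ≤ (k:ℝ) := by exact_mod_cast hk1
    have hknr : (k:ℝ) ≤ (n:ℝ) := by exact_mod_cast hkn
    have hmul1 : (β ^ k)⁻¹ * (leftpt β v + (β ^ (n-k))⁻¹) ≤ (β ^ k)⁻¹ * 1 :=
      mul_le_mul_of_nonneg_left hvtop htk.le
    have hmul2 : (β ^ k)⁻¹ * (1 - ((n:ℝ) - (k:ℝ)) * (β ^ (n-k))⁻¹ - (β ^ n)⁻¹)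
        < (β ^ k)⁻¹ * (leftpt β v + (β ^ (n-k))⁻¹) :=
      mul_lt_mul_of_pos_left hv htk
    have hexpand : (β ^ k)⁻¹ * (1 - ((n:ℝ) - (k:ℝ)) * (β ^ (n-k))⁻¹ - (β ^ n)⁻¹)
        = (β ^ k)⁻¹ - ((n:ℝ) - (k:ℝ)) * (β ^ n)⁻¹ - (β ^ k)⁻¹ * (β ^ n)⁻¹ := by
      rw [mul_sub, mul_sub]
      rw [show (β ^ k)⁻¹ * (((n:ℝ) - k) * (β ^ (n-k))⁻¹)
          = ((n:ℝ) - k) * ((β ^ k)⁻¹ * (β ^ (n-k))⁻¹) by ring, hprod]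
      ring
    rw [hexpand] at hmul2
    have hsmall : (β ^ k)⁻¹ * (β ^ n)⁻¹ ≤ (β ^ n)⁻¹ := by nlinarith
    have hsplit : (β ^ k)⁻¹ * (leftpt β v + (β ^ (n-k))⁻¹)
        = (β ^ k)⁻¹ * leftpt β v + (β ^ n)⁻¹ := by rw [mul_add, hprod]
    rw [hsplit] at hmul2
    have hfit' : (n:ℝ) * (β ^ n)⁻¹ + 2 * (β ^ n)⁻¹ ≤ r := by linear_combination hfit
    have hA : ((n:ℝ) - (k:ℝ)) * (β ^ n)⁻¹ = (n:ℝ) * (β ^ n)⁻¹ - (k:ℝ) * (β ^ n)⁻¹ := by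
      ring
    have hB : (β ^ n)⁻¹ ≤ (k:ℝ) * (β ^ n)⁻¹ := by
      have := mul_le_mul_of_nonneg_right hk1r hbn.le
      linarith
    rw [hA] at hmul2
    refine ⟨u ++ v, goodW_append hβ hgu hgv, by simp [hulen, hvlen]; omega, ?_, ?_⟩
    · -- a ≤ leftpt (u ++ v)
      rw [hlw]
      linarith [hmul2, hpx1, hsmall, hfit', hB]
    · -- right end ≤ a + r
      rw [hlw]
      have hre : leftpt β u + (β ^ k)⁻¹ * leftpt β v + (β ^ n)⁻¹
          = leftpt β u + (β ^ k)⁻¹ * (leftpt β v + (β ^ (n-k))⁻¹) := by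
        rw [mul_add, hprod]; ring
      rw [hre]
      linarith [hmul1, hpx2]

lemma full_subset_interval (hβ : 1 < β) {n : ℕ} (hn : 1 ≤ n) {a r : ℝ} (hr0 : 0 < r)
    (hfit : ((n:ℝ) + 2) * (β ^ n)⁻¹ ≤ r) (hJ : Set.Icc a (a+r) ⊆ Set.Icc (0:ℝ) 1) :
    ∃ w : List ℤ, Adm β w ∧ IsFull β w ∧ cyl β w ⊆ Set.Icc a (a+r) ∧ w.length = n := by
  obtain ⟨w, hg, hlen, h1, h2⟩ := full_in_interval hβ hn hr0 hfit hJ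
  obtain ⟨hadm, hfull⟩ := adm_isfull_of_goodW hβ hg
  refine ⟨w, hadm, hfull, ?_, hlen⟩
  rw [cyl_eq_Ico hβ w hg, hlen]
  intro y hy
  exact ⟨le_trans h1 hy.1, le_trans hy.2.le h2⟩

end Stmt8
set_option maxHeartbeats 1000000 in
theorem stmt8 (β ε : ℝ) (hβ : 1 < β) (hε0 : 0 < ε) (hε1 : ε < 1) (n0 : ℕ)
    (hn0 : ∀ n : ℕ, n0 ≤ n → 2 * (n : ℝ) ^ 2 * β < β ^ (((n : ℝ) - 1) * ε))
    (a r : ℝ) (hr0 : 0 < r) (hrn0 : r < 2 * n0 * (β ^ n0)⁻¹)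
    (hJ : Set.Icc a (a + r) ⊆ Set.Icc (0:ℝ) 1) :
    ∃ w : List ℤ, Adm β w ∧ IsFull β w ∧ cyl β w ⊆ Set.Icc a (a + r) ∧
      (β ^ w.length)⁻¹ ≤ r ∧ r ^ (1 + ε) < (β ^ w.length)⁻¹ := by
  classical
  have hβ0 : 0 < β := lt_trans one_pos hβ
  have ha0 : 0 ≤ a := (hJ ⟨le_refl a, by linarith⟩).1
  have har1 : a + r ≤ 1 := (hJ ⟨by linarith, le_refl _⟩).2
  have hr1 : r ≤ 1 := by linarith
  have hn03 : 3 ≤ n0 := by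
    by_contra hcon
    push_neg at hcon
    have h2 := hn0 2 (by omega)
    have hεle : (((2:ℕ):ℝ) - 1) * ε ≤ 1 := by push_cast; nlinarith
    have hle : β ^ ((((2:ℕ):ℝ) - 1) * ε) ≤ β ^ (1:ℝ) :=
      Real.rpow_le_rpow_of_exponent_le hβ.le hεle
    rw [Real.rpow_one] at hle
    have h8 : 2 * ((2:ℕ):ℝ) ^ 2 * β = 8 * β := by push_cast; ring
    rw [h8] at h2
    nlinarith [lt_of_lt_of_le h2 hle]
  have hex : ∃ n : ℕ, ((n:ℝ) + 2) * (β ^ n)⁻¹ ≤ r := by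
    set c : ℝ := β - 1 with hcdef
    have hc : 0 < c := by simp only [hcdef]; linarith
    obtain ⟨m, hm⟩ := exists_nat_ge (4 / (c^2 * r))
    set m' : ℕ := max m 1 with hm'def
    have hm'1 : 1 ≤ m' := le_max_right _ _
    have hm'1r : (1:ℝ) ≤ (m':ℝ) := by exact_mod_cast hm'1
    have hm'm : (m:ℝ) ≤ (m':ℝ) := by exact_mod_cast le_max_left m 1
    have h4 : 4 ≤ (m':ℝ) * (c^2 * r) := by
      have hpos : 0 < c^2 * r := by positivity
      rw [div_le_iff₀ hpos] at hm
      nlinarith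
    refine ⟨2 * m', ?_⟩
    have hBpos : (0:ℝ) < β ^ (2 * m') := by positivity
    rw [← div_eq_mul_inv, div_le_iff₀ hBpos]
    have hBern : 1 + (m':ℝ) * c ≤ β ^ m' := by
      have h := one_add_mul_le_pow (by linarith : (-2:ℝ) ≤ c) m'
      have he : (1:ℝ) + c = β := by simp only [hcdef]; ring
      rw [he] at h
      exact h
    have hsq : (β:ℝ) ^ (2*m') = (β ^ m')^2 := by
      rw [← pow_mul]
      ring_nf
    have hm'0 : (0:ℝ) ≤ (m':ℝ) := by positivity
    have hbm'pos : (0:ℝ) < β ^ m' := by positivity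
    have hBernSq : (1 + (m':ℝ)*c)^2 ≤ (β ^ m')^2 :=
      pow_le_pow_left₀ (by positivity) hBern 2
    rw [hsq]
    push_cast
    nlinarith [mul_le_mul_of_nonneg_left h4 hm'0, sq_nonneg ((m':ℝ)*c),
      mul_le_mul_of_nonneg_left hBernSq hr0.le, mul_pos hc hr0,
      mul_nonneg (mul_nonneg hm'0 hc.le) hr0.le]
  set n := Nat.find hex with hndef
  have hPn : ((n:ℝ) + 2) * (β ^ n)⁻¹ ≤ r := Nat.find_spec hex
  have hbn : (0:ℝ) < (β ^ n)⁻¹ := by positivity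
  have hn1 : 1 ≤ n := by
    rcases Nat.eq_zero_or_pos n with h | h
    · exfalso
      rw [h] at hPn
      norm_num at hPn
      linarith
    · exact h
  obtain ⟨w, hadm, hfull, hsub, hwlen⟩ := Stmt8.full_subset_interval hβ hn1 hr0 hPn hJ
  refine ⟨w, hadm, hfull, hsub, ?_, ?_⟩
  · rw [hwlen]
    have h1 : (1:ℝ) ≤ (n:ℝ) + 2 := by
      have : (0:ℝ) ≤ (n:ℝ) := Nat.cast_nonneg n
      linarith
    nlinarith
  · rw [hwlen]
    -- upper bound on r from minimality
    have hmin := Nat.find_min hex (show n - 1 < n by omega)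
    push_neg at hmin
    have hco : (((n-1:ℕ)):ℝ) = (n:ℝ) - 1 := by
      push_cast [Nat.cast_sub hn1]
      ring
    rw [hco] at hmin
    have hup : r < ((n:ℝ) + 1) * (β ^ (n-1))⁻¹ := by
      have he : (n:ℝ) - 1 + 2 = (n:ℝ) + 1 := by ring
      rw [he] at hmin
      exact hmin
    have h1 : r ^ (1 + ε) < (((n:ℝ) + 1) * (β ^ (n-1))⁻¹) ^ (1 + ε) :=
      Real.rpow_lt_rpow hr0.le hup (by linarith)
    refine lt_of_lt_of_le h1 ?_
    have hA : (0:ℝ) < ((n:ℝ) + 1) * (β ^ (n-1))⁻¹ := by positivity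
    rw [← Real.log_le_log_iff (by positivity) hbn]
    rw [Real.log_rpow hA, Real.log_mul (by positivity) (by positivity),
        Real.log_inv, Real.log_inv, Real.log_pow, Real.log_pow, hco]
    have hb : 0 < Real.log β := Real.log_pos hβ
    have hp1 : (1:ℝ) ≤ (n:ℝ) := by exact_mod_cast hn1
    have hL0 : 0 ≤ Real.log ((n:ℝ) + 1) := Real.log_nonneg (by linarith)
    have hεL : ε * Real.log ((n:ℝ) + 1) ≤ 1 * Real.log ((n:ℝ) + 1) :=
      mul_le_mul_of_nonneg_right (by linarith) hL0
    rcases le_or_gt n0 n with hcase | hcase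
    · -- use hn0 at n
      have H := hn0 n hcase
      have Hlog : Real.log 2 + 2 * Real.log (n:ℝ) + Real.log β
          < (((n:ℝ) - 1) * ε) * Real.log β := by
        have h' := Real.log_lt_log (by positivity) H
        rw [Real.log_rpow hβ0, Real.log_mul (by positivity) (by positivity),
            Real.log_mul (by norm_num) (by positivity), Real.log_pow] at h'
        push_cast at h'
        linarith
      have hn3 : (3:ℝ) ≤ (n:ℝ) := by exact_mod_cast le_trans hn03 hcase
      have h2L : Real.log (((n:ℝ)+1)^2) ≤ Real.log (2 * (n:ℝ)^2) :=
        Real.log_le_log (by positivity) (by nlinarith)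
      rw [Real.log_pow, Real.log_mul (by norm_num) (by positivity), Real.log_pow] at h2L
      push_cast at h2L
      nlinarith [h2L, Hlog, hεL]
    · -- n < n0
      have hq3 : (3:ℝ) ≤ (n0:ℝ) := by exact_mod_cast hn03
      have hq0 : (0:ℝ) < (n0:ℝ) := by linarith
      have hpq : (n:ℝ) + 1 ≤ (n0:ℝ) := by
        exact_mod_cast (show n + 1 ≤ n0 from hcase)
      have hgapexp : Real.log ((n:ℝ) + 2) - (n:ℝ) * Real.log β
          < Real.log 2 + Real.log (n0:ℝ) - (n0:ℝ) * Real.log β := by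
        have hgap0 : Real.log (((n:ℝ) + 2) * (β ^ n)⁻¹)
            < Real.log (2 * (n0:ℝ) * (β ^ n0)⁻¹) :=
          Real.log_lt_log (by positivity) (lt_of_le_of_lt hPn hrn0)
        rw [Real.log_mul (by positivity) (by positivity),
            Real.log_mul (mul_ne_zero two_ne_zero hq0.ne') (by positivity),
            Real.log_mul two_ne_zero hq0.ne',
            Real.log_inv, Real.log_inv, Real.log_pow, Real.log_pow] at hgap0
        linarith
      have H := hn0 n0 (le_refl n0)
      have Hlog : Real.log 2 + 2 * Real.log (n0:ℝ) + Real.log β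
          < (((n0:ℝ) - 1) * ε) * Real.log β := by
        have h' := Real.log_lt_log (by positivity) H
        rw [Real.log_rpow hβ0, Real.log_mul (by positivity) hβ0.ne',
            Real.log_mul (by norm_num) (by positivity), Real.log_pow] at h'
        push_cast at h'
        linarith
      have hmulε : ε * ((n0:ℝ) * Real.log β - (n:ℝ) * Real.log β)
          < ε * (Real.log 2 + Real.log (n0:ℝ) - Real.log ((n:ℝ)+2)) :=
        mul_lt_mul_of_pos_left (by linarith) hε0
      have hlog2 : (0:ℝ) ≤ Real.log 2 := Real.log_nonneg (by norm_num)
      have hlogq : (0:ℝ) ≤ Real.log (n0:ℝ) := Real.log_nonneg (by linarith)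
      have hLp2 : Real.log ((n:ℝ)+1) ≤ Real.log ((n:ℝ) + 2) :=
        Real.log_le_log (by positivity) (by linarith)
      have hLq : Real.log ((n:ℝ)+1) ≤ Real.log (n0:ℝ) :=
        Real.log_le_log (by positivity) (by linarith)
      have em1 : ε * Real.log ((n:ℝ)+1) ≤ ε * Real.log ((n:ℝ)+2) :=
        mul_le_mul_of_nonneg_left hLp2 hε0.le
      have em2 : ε * Real.log 2 ≤ Real.log 2 := by nlinarith
      have em3 : ε * Real.log (n0:ℝ) ≤ Real.log (n0:ℝ) := by nlinarith
      nlinarith [hmulε, Hlog, em1, em2, em3, hLq, hlog2, hlogq]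
end
end
end
end
end
end
end
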